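/- Let n ≥ 2 be an integer and let α, λ, C be real numbers with α ≥ 0, λ ≥ 0, 2λ + (n+1)α ≤ 1, and C ≥ 1. Define the polytopes Δ₁ = {x ∈ ℝⁿ : x₁ ≥ 0, x_j ≥ −λ for 2 ≤ j ≤ n, (n−1)α ≤ ∑_{j=1}^n x_j ≤ C}, Δ₂ = {y = (y₂,…,y_n) ∈ ℝ^{n−1} : y_j ≥ 0 for all j, ∑_{j=2}^n y_j ≤ nα}, Δ₃ = {z ∈ ℝ : −1 + 2nα + 2λ ≤ z ≤ 1}, and Δ_α^n = {x ∈ ℝⁿ : x_j ≥ 0 for all j, (n−1)α ≤ ∑_{j=1}^n x_j ≤ 1, ∑_{j=2}^n x_j ≤ nα}. Then {x ∈ ℝⁿ : x ∈ Δ₁ and there exist y ∈ Δ₂ and z ∈ Δ₃ with x_j = y_j for all 2 ≤ j ≤ n and ∑_{j=1}^n x_j = z} = Δ_α^n. -/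

import Mathlib

open Finset

/-- The Abreu–Macarini reduction identity: the projection to the `x`-coordinates of the level
set `{x₂ = y₂, …, xₙ = yₙ, ∑ xⱼ = z}` inside `Δ₁ × Δ₂ × Δ₃` is exactly the moment polytope
`Δ_α^n` of the two-fold toric blowup `(Y^{2n}, ω_α)` of `ℂPⁿ`. -/
theorem abreu_macarini_polytope_reduction (n : ℕ) (hn : 2 ≤ n) (α lam C : ℝ)
    (hα : 0 ≤ α) (hlam : 0 ≤ lam) (hsmall : 2 * lam + ((n : ℝ) + 1) * α ≤ 1) (hC : 1 ≤ C) :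
    {x : Fin n → ℝ |
        (0 ≤ x ⟨0, by omega⟩ ∧ (∀ i : Fin n, 1 ≤ (i : ℕ) → -lam ≤ x i) ∧
          ((n : ℝ) - 1) * α ≤ ∑ j, x j ∧ ∑ j, x j ≤ C) ∧
        ∃ y : Fin (n - 1) → ℝ,
          ((∀ i, 0 ≤ y i) ∧ ∑ i, y i ≤ (n : ℝ) * α) ∧
          ∃ z : ℝ,
            (-1 + 2 * (n : ℝ) * α + 2 * lam ≤ z ∧ z ≤ 1) ∧
            (∀ i : Fin (n - 1), x ⟨(i : ℕ) + 1, by have := i.isLt; omega⟩ = y i) ∧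
            ∑ j, x j = z} =
      {x : Fin n → ℝ |
        (∀ i, 0 ≤ x i) ∧ ((n : ℝ) - 1) * α ≤ ∑ j, x j ∧ ∑ j, x j ≤ 1 ∧
          ∑ i ∈ univ.filter (fun i : Fin n => 1 ≤ (i : ℕ)), x i ≤ (n : ℝ) * α} := by
  have tail_sum_eq : ∀ (n : ℕ) (hn : 2 ≤ n) (x : Fin n → ℝ),
        ∑ i ∈ univ.filter (fun i : Fin n => 1 ≤ (i : ℕ)), x i
          = ∑ i : Fin (n - 1), x ⟨(i : ℕ) + 1, by have := i.isLt; omega⟩ := by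
    intro n hn x
    symm
    refine Finset.sum_nbij' (fun i : Fin (n - 1) => (⟨(i : ℕ) + 1, by have := i.isLt; omega⟩ : Fin n))
      (fun j : Fin n => (⟨(j : ℕ) - 1, by have := j.isLt; omega⟩ : Fin (n - 1)))
      ?_ ?_ ?_ ?_ ?_
    · intro a _; simp only [mem_filter, mem_univ, true_and]; omega
    · intro a _; exact mem_univ _
    · intro a _; apply Fin.ext; simp
    · intro a ha
      simp only [mem_filter, mem_univ, true_and] at ha
      apply Fin.ext; simp; omega
    · intro a _; rfl
  have hn' : (2 : ℝ) ≤ (n : ℝ) := by exact_mod_cast hn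
  ext x
  simp only [Set.mem_setOf_eq]
  constructor
  · rintro ⟨⟨h0, _, hlo, _⟩, y, ⟨hy0, hysum⟩, z, ⟨_, hz1⟩, hxy, hxz⟩
    refine ⟨?_, hlo, by linarith [hxz ▸ hz1], ?_⟩
    · intro i
      rcases Nat.eq_zero_or_pos (i : ℕ) with hi | hi
      · have : i = ⟨0, by omega⟩ := Fin.ext hi
        rwa [this]
      · have : x i = y ⟨(i : ℕ) - 1, by have := i.isLt; omega⟩ := by
          rw [← hxy ⟨(i : ℕ) - 1, by have := i.isLt; omega⟩]
          congr 1
          apply Fin.ext; simp; omega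
        rw [this]; exact hy0 _
    · rw [tail_sum_eq n hn x]
      calc ∑ i : Fin (n-1), x ⟨(i : ℕ) + 1, by have := i.isLt; omega⟩
          = ∑ i : Fin (n-1), y i := by exact Finset.sum_congr rfl (fun i _ => hxy i)
        _ ≤ (n : ℝ) * α := hysum
  · rintro ⟨h0, hlo, hhi, htail⟩
    refine ⟨⟨h0 _, fun i _ => by linarith [h0 i], hlo, by linarith⟩,
      fun i => x ⟨(i : ℕ) + 1, by have := i.isLt; omega⟩, ⟨fun i => h0 _, ?_⟩,
      ∑ j, x j, ⟨by linarith, hhi⟩, fun i => rfl, rfl⟩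
    rw [← tail_sum_eq n hn x]; exact htail
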